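/- Suppose g, h0 > 0, u0 ≠ 0, and a < a0. Then φ(h0) = a0 - a > 0. Consequently, if u0^2 > g h0 (so h0 < h_min), then the smaller root satisfies h0 < h*, while if u0^2 < g h0 (so h0 > h_min), then the larger root satisfies h** < h0. -/

import Mathlib

set_option maxHeartbeats 1000000


theorem shallow_water_roots_same_side (g h0 u0 a0 a : ℝ)
    (hg : 0 < g) (hh0 : 0 < h0) (hu0 : u0 ≠ 0) (ha : a < a0) :
    let φ : ℝ → ℝ := fun h =>
      a0 - a + u0 ^ 2 / (2 * g) * (h0 ^ 2 / h ^ 2 - 1) + h - h0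
    let hmin : ℝ := (u0 ^ 2 * h0 ^ 2 / g) ^ ((1 : ℝ) / 3)
    φ h0 = a0 - a ∧ φ h0 > 0 ∧
    (u0 ^ 2 > g * h0 → ∀ hs : ℝ, 0 < hs → hs ≤ hmin → φ hs = 0 → h0 < hs) ∧
    (u0 ^ 2 < g * h0 → ∀ hss : ℝ, hmin ≤ hss → φ hss = 0 → hss < h0) := by
  intro φ hmin
  have hu2 : 0 < u0 ^ 2 := by positivity
  have hc : 0 < u0 ^ 2 * h0 ^ 2 / g := by positivity
  have hm0 : 0 < hmin := Real.rpow_pos_of_pos hc _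
  have hm3 : hmin ^ 3 = u0 ^ 2 * h0 ^ 2 / g := by
    have := Real.rpow_natCast ((u0 ^ 2 * h0 ^ 2 / g) ^ ((1:ℝ)/3)) 3
    rw [show ((3:ℕ):ℝ) = (3:ℝ) by norm_num] at this
    rw [show (hmin ^ 3 : ℝ) = hmin ^ (3:ℕ) by norm_num, ← this,
      ← Real.rpow_mul hc.le]
    norm_num
  have hgm : g * hmin ^ 3 = u0 ^ 2 * h0 ^ 2 := by
    field_simp at hm3; linarith [hm3]
  clear_value hmin
  have hφ0 : φ h0 = a0 - a := by
    simp only [φ]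
    field_simp
    ring
  refine ⟨hφ0, by rw [hφ0]; linarith, ?_, ?_⟩
  · intro hgt hs hs0 hsm heq
    have hh0m : h0 < hmin := by
      by_contra h
      push_neg at h
      have h3 : hmin ^ 3 ≤ h0 ^ 3 := pow_le_pow_left₀ hm0.le h 3
      have e1 : g * hmin ^ 3 ≤ g * h0 ^ 3 := mul_le_mul_of_nonneg_left h3 hg.le
      have e2 : g * h0 * h0 ^ 2 < u0 ^ 2 * h0 ^ 2 :=
        mul_lt_mul_of_pos_right hgt (pow_pos hh0 2)
      linarith only [e1, e2, hgm]
    by_contra hle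
    push_neg at hle
    have heq' : 2 * g * (a0 - a) * hs ^ 2 + u0 ^ 2 * (h0 ^ 2 - hs ^ 2)
        + 2 * g * hs ^ 2 * (hs - h0) = 0 := by
      simp only [φ] at heq
      field_simp at heq
      nlinarith [heq]
    have t1 : 2 * hs * h0 ≤ hmin * (hs + h0) := by
      nlinarith [mul_nonneg hs0.le (sub_nonneg.2 hh0m.le),
        mul_nonneg hh0.le (sub_nonneg.2 hsm)]
    have t2 : hs * h0 < hmin * hmin := by
      nlinarith [mul_pos hm0 (sub_pos.2 hh0m),
        mul_nonneg hh0.le (sub_nonneg.2 hsm)]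
    have key : 2 * hs ^ 2 * h0 ^ 2 < hmin ^ 3 * (hs + h0) := by
      nlinarith [mul_pos hs0 hh0, mul_pos hm0 (add_pos hs0 hh0),
        mul_nonneg (mul_nonneg hs0.le hh0.le) (sub_nonneg.2 t1)]
    have hbr : 0 < u0 ^ 2 * (h0 + hs) - 2 * g * hs ^ 2 := by
      nlinarith [mul_pos hg (sub_pos.2 key), sq_nonneg h0, mul_pos hh0 hh0]
    nlinarith [heq', mul_nonneg (sub_nonneg.2 hle) hbr.le,
      mul_pos (mul_pos hg (sub_pos.2 ha)) (mul_pos hs0 hs0)]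
  · intro hlt hss hsm heq
    have hss0 : 0 < hss := lt_of_lt_of_le hm0 hsm
    have hh0m : hmin < h0 := by
      by_contra h
      push_neg at h
      have h3 : h0 ^ 3 ≤ hmin ^ 3 := pow_le_pow_left₀ hh0.le h 3
      have e1 : g * h0 ^ 3 ≤ g * hmin ^ 3 := mul_le_mul_of_nonneg_left h3 hg.le
      have e2 : u0 ^ 2 * h0 ^ 2 < g * h0 * h0 ^ 2 :=
        mul_lt_mul_of_pos_right hlt (pow_pos hh0 2)
      linarith only [e1, e2, hgm]
    by_contra hle
    push_neg at hle
    have heq' : 2 * g * (a0 - a) * hss ^ 2 + u0 ^ 2 * (h0 ^ 2 - hss ^ 2)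
        + 2 * g * hss ^ 2 * (hss - h0) = 0 := by
      simp only [φ] at heq
      field_simp at heq
      nlinarith [heq]
    have t3 : hmin ^ 3 < h0 ^ 3 := pow_lt_pow_left₀ hh0m hm0.le (by norm_num)
    have t4 : h0 ^ 2 + h0 * hss ≤ 2 * hss ^ 2 := by
      nlinarith [mul_nonneg hh0.le (sub_nonneg.2 hle),
        mul_nonneg hss0.le (sub_nonneg.2 hle)]
    have key : hmin ^ 3 * (h0 + hss) < 2 * h0 ^ 2 * hss ^ 2 := by
      nlinarith [mul_pos (sub_pos.2 t3) (add_pos hh0 hss0),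
        mul_nonneg (sq_nonneg h0) (sub_nonneg.2 t4), add_pos hh0 hss0]
    have hbr : 0 < 2 * g * hss ^ 2 - u0 ^ 2 * (h0 + hss) := by
      nlinarith [mul_pos hg (sub_pos.2 key), sq_nonneg h0, mul_pos hh0 hh0]
    nlinarith [heq', mul_nonneg (sub_nonneg.2 hle) hbr.le,
      mul_pos (mul_pos hg (sub_pos.2 ha)) (mul_pos hss0 hss0)]
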